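/- For any matrix B ∈ ℝ^{M×N}, the generalized Huber function S_B is differentiable and its gradient satisfies ‖∇S_B(x)‖_∞ ≤ 1 for all x ∈ ℝ^N; that is, |∂S_B/∂x_n (x)| ≤ 1 for every coordinate n and every x ∈ ℝ^N. -/

import Mathlib

open Matrix

/-- The ℓ₁ norm on `ℝ^N`. -/
noncomputable def norm1 {N : ℕ} (v : Fin N → ℝ) : ℝ := ∑ n, |v n|

/-- The squared Euclidean (ℓ₂) norm on `ℝ^M`. -/
def norm2sq {M : ℕ} (u : Fin M → ℝ) : ℝ := ∑ m, (u m) ^ 2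

/-- The generalized Huber function
`S_B(x) = inf_v ( ‖v‖₁ + (1/2) ‖B(x - v)‖₂² )`. -/
noncomputable def genHuber {M N : ℕ} (B : Matrix (Fin M) (Fin N) ℝ) (x : Fin N → ℝ) : ℝ :=
  ⨅ v : Fin N → ℝ, (norm1 v + (1 / 2) * norm2sq (B.mulVec (x - v)))

/-- The generalized MC (GMC) penalty `ψ_B(x) = ‖x‖₁ - S_B(x)`. -/
noncomputable def gmcPenalty {M N : ℕ} (B : Matrix (Fin M) (Fin N) ℝ) (x : Fin N → ℝ) : ℝ :=
  norm1 x - genHuber B x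

namespace GenHuberAux

/-- Dot product on `ℝ^M`. -/
def dotp {M : ℕ} (u w : Fin M → ℝ) : ℝ := ∑ m, u m * w m

/-- The objective function of the generalized Huber infimum. -/
noncomputable def fB {M N : ℕ} (B : Matrix (Fin M) (Fin N) ℝ) (x v : Fin N → ℝ) : ℝ :=
  norm1 v + (1 / 2) * norm2sq (B.mulVec (x - v))

variable {M N : ℕ}

lemma norm2sq_nonneg (u : Fin M → ℝ) : 0 ≤ norm2sq u :=
  Finset.sum_nonneg fun _ _ => sq_nonneg _

lemma norm1_nonneg (v : Fin N → ℝ) : 0 ≤ norm1 v :=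
  Finset.sum_nonneg fun _ _ => abs_nonneg _

lemma fB_nonneg (B : Matrix (Fin M) (Fin N) ℝ) (x v : Fin N → ℝ) : 0 ≤ fB B x v :=
  add_nonneg (norm1_nonneg v) (mul_nonneg (by norm_num) (norm2sq_nonneg _))

lemma dotp_sub_left (u w z : Fin M → ℝ) : dotp (u - w) z = dotp u z - dotp w z := by
  simp only [dotp, Pi.sub_apply, sub_mul]
  exact Finset.sum_sub_distrib ..

lemma dotp_smul_right (u : Fin M → ℝ) (t : ℝ) (w : Fin M → ℝ) :
    dotp u (t • w) = t * dotp u w := by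
  simp only [dotp, Pi.smul_apply, smul_eq_mul, Finset.mul_sum]
  exact Finset.sum_congr rfl fun m _ => by ring

lemma dotp_sub_right (u w z : Fin M → ℝ) : dotp u (w - z) = dotp u w - dotp u z := by
  simp only [dotp, Pi.sub_apply, mul_sub]
  exact Finset.sum_sub_distrib ..

lemma dotp_neg_right (u w : Fin M → ℝ) : dotp u (-w) = - dotp u w := by
  simp only [dotp, Pi.neg_apply, mul_neg]
  exact Finset.sum_neg_distrib ..

lemma norm2sq_add (u w : Fin M → ℝ) :
    norm2sq (u + w) = norm2sq u + 2 * dotp u w + norm2sq w := by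
  simp only [norm2sq, dotp, Pi.add_apply, Finset.mul_sum]
  rw [← Finset.sum_add_distrib, ← Finset.sum_add_distrib]
  exact Finset.sum_congr rfl fun m _ => by ring

lemma norm2sq_sub (u w : Fin M → ℝ) :
    norm2sq (u - w) = norm2sq u - 2 * dotp u w + norm2sq w := by
  simp only [norm2sq, dotp, Pi.sub_apply, Finset.mul_sum]
  rw [← Finset.sum_sub_distrib, ← Finset.sum_add_distrib]
  exact Finset.sum_congr rfl fun m _ => by ring

lemma norm2sq_neg (u : Fin M → ℝ) : norm2sq (-u) = norm2sq u := by
  simp [norm2sq]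

lemma dotp_self (u : Fin M → ℝ) : dotp u u = norm2sq u := by
  simp [dotp, norm2sq, sq]

lemma dotp_sq_le (u w : Fin M → ℝ) : (dotp u w) ^ 2 ≤ norm2sq u * norm2sq w :=
  Finset.sum_mul_sq_le_sq_mul_sq _ _ _

lemma continuous_fB (B : Matrix (Fin M) (Fin N) ℝ) (x : Fin N → ℝ) :
    Continuous (fB B x) := by
  unfold fB norm1 norm2sq
  apply Continuous.add
  · exact continuous_finset_sum _ fun n _ => (continuous_apply n).abs
  · apply Continuous.mul continuous_const
    apply continuous_finset_sum _ fun m _ => ?_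
    have : (fun v : Fin N → ℝ => (B.mulVec (x - v) m) ^ 2) =
        fun v => (∑ n, B m n * (x n - v n)) ^ 2 := by
      funext v; simp [Matrix.mulVec, dotProduct]
    rw [this]
    exact (continuous_finset_sum _ fun n _ =>
      continuous_const.mul (continuous_const.sub (continuous_apply n))).pow 2

lemma exists_min (B : Matrix (Fin M) (Fin N) ℝ) (x : Fin N → ℝ) :
    ∃ v, ∀ w, fB B x v ≤ fB B x w := by
  set R := fB B x 0 with hR
  have hR0 : 0 ≤ R := fB_nonneg B x 0
  obtain ⟨v, hvmem, hvmin⟩ := (isCompact_closedBall (0 : Fin N → ℝ) R).exists_isMinOn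
    ⟨0, Metric.mem_closedBall_self hR0⟩ (continuous_fB B x).continuousOn
  refine ⟨v, fun w => ?_⟩
  by_cases hw : w ∈ Metric.closedBall (0 : Fin N → ℝ) R
  · exact hvmin hw
  · have h1 : R < ‖w‖ := by
      simpa [Metric.mem_closedBall, dist_zero_right] using hw
    have h2 : ‖w‖ ≤ norm1 w := by
      rw [pi_norm_le_iff_of_nonneg (norm1_nonneg w)]
      intro n
      have := Finset.single_le_sum (f := fun k => |w k|)
        (fun k _ => abs_nonneg _) (Finset.mem_univ n)
      simpa [Real.norm_eq_abs, norm1] using this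
    have h3 : norm1 w ≤ fB B x w :=
      le_add_of_nonneg_right (mul_nonneg (by norm_num) (norm2sq_nonneg _))
    have h4 : fB B x v ≤ R := hvmin (Metric.mem_closedBall_self hR0)
    linarith

lemma genHuber_eq {B : Matrix (Fin M) (Fin N) ℝ} {x v : Fin N → ℝ}
    (hv : ∀ w, fB B x v ≤ fB B x w) : genHuber B x = fB B x v := by
  have h1 : genHuber B x = ⨅ w, fB B x w := rfl
  rw [h1]
  apply le_antisymm
  · exact ciInf_le ⟨0, by rintro y ⟨w, rfl⟩; exact fB_nonneg B x w⟩ v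
  · exact le_ciInf hv

/-- The residual gives a subgradient of the ℓ₁ norm at the minimizer. -/
lemma subgrad {B : Matrix (Fin M) (Fin N) ℝ} {x v : Fin N → ℝ}
    (hv : ∀ w, fB B x v ≤ fB B x w) (w : Fin N → ℝ) :
    dotp (B.mulVec (x - v)) (B.mulVec (w - v)) ≤ norm1 w - norm1 v := by
  set r := B.mulVec (x - v) with hr
  set d := B.mulVec (w - v) with hd
  set Q := norm2sq d with hQdef
  have hQ : 0 ≤ Q := norm2sq_nonneg d
  have key : ∀ t : ℝ, 0 < t → t ≤ 1 →
      dotp r d ≤ norm1 w - norm1 v + t * (Q / 2) := by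
    intro t ht0 ht1
    have h1 := hv (v + t • (w - v))
    have hn : norm1 (v + t • (w - v)) ≤ (1 - t) * norm1 v + t * norm1 w := by
      unfold norm1
      rw [Finset.mul_sum, Finset.mul_sum, ← Finset.sum_add_distrib]
      refine Finset.sum_le_sum fun n _ => ?_
      have e : (v + t • (w - v)) n = (1 - t) * v n + t * w n := by
        simp only [Pi.add_apply, Pi.smul_apply, Pi.sub_apply, smul_eq_mul]; ring
      rw [e]
      calc |(1 - t) * v n + t * w n| ≤ |(1 - t) * v n| + |t * w n| := abs_add_le _ _
        _ = (1 - t) * |v n| + t * |w n| := by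
            rw [abs_mul, abs_mul, abs_of_nonneg (by linarith), abs_of_nonneg ht0.le]
    have hm : B.mulVec (x - (v + t • (w - v))) = r - t • d := by
      have e : x - (v + t • (w - v)) = (x - v) - t • (w - v) := by
        rw [smul_sub]; abel
      rw [e, Matrix.mulVec_sub, Matrix.mulVec_smul, hr, hd]
    have hq : norm2sq (r - t • d) = norm2sq r - 2 * (t * dotp r d) + t ^ 2 * Q := by
      rw [norm2sq_sub, dotp_smul_right]
      have : norm2sq (t • d) = t ^ 2 * Q := by
        simp only [norm2sq, Pi.smul_apply, smul_eq_mul, hQdef, Finset.mul_sum]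
        exact Finset.sum_congr rfl fun m _ => by ring
      rw [this]
    have h2 : fB B x (v + t • (w - v)) =
        norm1 (v + t • (w - v)) + (1 / 2) * (norm2sq r - 2 * (t * dotp r d) + t ^ 2 * Q) := by
      unfold fB; rw [hm, hq]
    have h3 : fB B x v = norm1 v + (1 / 2) * norm2sq r := rfl
    rw [h3, h2] at h1
    have h4 : t * (dotp r d - (norm1 w - norm1 v)) ≤ t * (t * (Q / 2)) := by nlinarith
    have h5 := le_of_mul_le_mul_left h4 ht0
    linarith
  by_contra hc
  push_neg at hc
  set ε := dotp r d - (norm1 w - norm1 v) with hε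
  have hε0 : 0 < ε := by simp only [hε]; linarith
  set t := min 1 (ε / (Q + 1)) with ht
  have ht0 : 0 < t := lt_min one_pos (div_pos hε0 (by linarith))
  have ht1 : t ≤ 1 := min_le_left _ _
  have hk := key t ht0 ht1
  have h6 : t * (Q + 1) ≤ ε := by
    have := min_le_right 1 (ε / (Q + 1))
    calc t * (Q + 1) ≤ (ε / (Q + 1)) * (Q + 1) :=
          mul_le_mul_of_nonneg_right (min_le_right _ _) (by linarith)
      _ = ε := div_mul_cancel₀ ε (by linarith)
  have h7 : t * (Q / 2) < t * (Q + 1) :=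
    mul_lt_mul_of_pos_left (by linarith) ht0
  linarith

/-- Nonexpansiveness of the residual map. -/
lemma resid_nonexpansive {B : Matrix (Fin M) (Fin N) ℝ} {x y vx vy : Fin N → ℝ}
    (hx : ∀ w, fB B x vx ≤ fB B x w) (hy : ∀ w, fB B y vy ≤ fB B y w) :
    norm2sq (B.mulVec (x - vx) - B.mulVec (y - vy)) ≤ norm2sq (B.mulVec (x - y)) := by
  set rx := B.mulVec (x - vx) with hrx
  set ry := B.mulVec (y - vy) with hry
  set d := rx - ry with hdd
  have h1 := subgrad hx vy
  have h2 := subgrad hy vx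
  have e1 : B.mulVec (vy - vx) = - B.mulVec (vx - vy) := by
    rw [show vy - vx = -(vx - vy) from by abel, Matrix.mulVec_neg]
  have hmono : 0 ≤ dotp d (B.mulVec (vx - vy)) := by
    rw [hdd, dotp_sub_left]
    rw [e1, dotp_neg_right] at h1
    linarith
  have hd2 : d = B.mulVec (x - y) - B.mulVec (vx - vy) := by
    rw [hdd, hrx, hry, ← Matrix.mulVec_sub, ← Matrix.mulVec_sub]
    rw [show x - vx - (y - vy) = x - y - (vx - vy) from by abel]
  have h3 : norm2sq d ≤ dotp d (B.mulVec (x - y)) := by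
    have e := dotp_sub_right d (B.mulVec (x - y)) (B.mulVec (vx - vy))
    rw [← hd2, dotp_self] at e
    linarith
  have h4 := dotp_sq_le d (B.mulVec (x - y))
  set s := norm2sq d with hs
  set c := norm2sq (B.mulVec (x - y)) with hc
  have hs0 : 0 ≤ s := norm2sq_nonneg d
  have hc0 : 0 ≤ c := norm2sq_nonneg _
  nlinarith [mul_le_mul_of_nonneg_left h3 hs0, h4]

/-- ℓ₁ norm change when modifying one coordinate. -/
lemma norm1_add_single_le (v : Fin N → ℝ) (n : Fin N) (a : ℝ) :
    norm1 (v + Pi.single n a) ≤ norm1 v + |a| := by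
  have h1 : ∀ k : Fin N, |v k + (Pi.single n a : Fin N → ℝ) k| ≤
      |v k| + (if k = n then |a| else 0) := by
    intro k
    rcases eq_or_ne k n with h | h
    · subst h
      simp only [Pi.single_eq_same, if_pos rfl]
      exact abs_add_le _ _
    · simp [Pi.single_eq_of_ne h, h]
  have h2 : norm1 (v + Pi.single n a) ≤ ∑ k, (|v k| + if k = n then |a| else 0) :=
    Finset.sum_le_sum fun k _ => h1 k
  have h3 : (∑ k, (|v k| + if k = n then |a| else 0)) = norm1 v + |a| := by
    rw [Finset.sum_add_distrib, Finset.sum_ite_eq' Finset.univ n fun _ => |a|]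
    simp [norm1]
  rw [h3] at h2
  exact h2

end GenHuberAux

set_option maxHeartbeats 1000000 in
open GenHuberAux in
/-- The generalized Huber function is differentiable and every partial derivative
is bounded by 1 in absolute value: `‖∇S_B(x)‖_∞ ≤ 1`. -/
theorem genHuber_gradient_bound {M N : ℕ} (B : Matrix (Fin M) (Fin N) ℝ) :
    ∀ x : Fin N → ℝ, DifferentiableAt ℝ (genHuber B) x ∧
      ∀ n : Fin N, |fderiv ℝ (genHuber B) x (Pi.single n 1)| ≤ 1 := by
  intro x
  obtain ⟨vx, hvx⟩ := exists_min B x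
  set r := B.mulVec (x - vx) with hrdef
  set c : Fin N → ℝ := fun n => dotp r (B.mulVec (Pi.single n 1)) with hcdef
  set L : (Fin N → ℝ) →L[ℝ] ℝ := ∑ n, c n • ContinuousLinearMap.proj n with hLdef
  have hL : ∀ h, L h = dotp r (B.mulVec h) := by
    intro h
    have hLh : L h = ∑ n, c n * h n := by
      simp [hLdef, ContinuousLinearMap.sum_apply]
    have hc : ∀ n, c n = ∑ m, r m * B m n := by
      intro n
      have e : B.mulVec (Pi.single n 1) = fun m => B m n := by
        funext m
        rw [Matrix.mulVec_single]
        simp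
      rw [hcdef]
      simp only [dotp, e]
    rw [hLh]
    symm
    calc dotp r (B.mulVec h) = ∑ m, ∑ n, r m * (B m n * h n) := by
          simp only [dotp, Matrix.mulVec, dotProduct, Finset.mul_sum]
      _ = ∑ n, ∑ m, r m * (B m n * h n) := Finset.sum_comm
      _ = ∑ n, c n * h n := by
          refine Finset.sum_congr rfl fun n _ => ?_
          rw [hc n, Finset.sum_mul]
          exact Finset.sum_congr rfl fun m _ => by ring
  -- key two-sided estimate
  have hkey : ∀ h : Fin N → ℝ,
      |genHuber B (x + h) - genHuber B x - dotp r (B.mulVec h)| ≤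
        2 * norm2sq (B.mulVec h) := by
    intro h
    obtain ⟨vy, hvy⟩ := exists_min B (x + h)
    set r' := B.mulVec (x + h - vy) with hr'
    have hSx := genHuber_eq hvx
    have hSy := genHuber_eq hvy
    set Q := norm2sq (B.mulVec h) with hQ
    have hQ0 : 0 ≤ Q := norm2sq_nonneg _
    have hu : genHuber B (x + h) ≤ genHuber B x + dotp r (B.mulVec h) + (1 / 2) * Q := by
      have e1 : fB B (x + h) vx = norm1 vx + (1 / 2) * norm2sq (r + B.mulVec h) := by
        unfold fB
        rw [show x + h - vx = (x - vx) + h by abel, Matrix.mulVec_add, hrdef]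
      have h2 := hvy vx
      rw [hSy, hSx]
      rw [e1, norm2sq_add] at h2
      have e2 : fB B x vx = norm1 vx + (1 / 2) * norm2sq r := rfl
      rw [e2]
      linarith
    have hl : genHuber B x ≤ genHuber B (x + h) - dotp r' (B.mulVec h) + (1 / 2) * Q := by
      have e1 : fB B x vy = norm1 vy + (1 / 2) * norm2sq (r' - B.mulVec h) := by
        unfold fB
        rw [show x - vy = (x + h - vy) - h by abel, Matrix.mulVec_sub, hr']
      have h2 := hvx vy
      rw [hSx, hSy]
      rw [e1, norm2sq_sub] at h2
      have e2 : fB B (x + h) vy = norm1 vy + (1 / 2) * norm2sq r' := rfl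
      rw [e2]
      linarith
    have hne : norm2sq (r' - r) ≤ Q := by
      have := resid_nonexpansive hvy hvx
      rw [show x + h - x = h from by abel] at this
      rw [← hrdef, ← hr'] at this
      exact this
    have hcs := dotp_sq_le (r' - r) (B.mulVec h)
    have habs : |dotp (r' - r) (B.mulVec h)| ≤ Q := by
      set D := dotp (r' - r) (B.mulVec h) with hD
      have h5 : D ^ 2 ≤ Q ^ 2 := by nlinarith [hne, hQ0, norm2sq_nonneg (r' - r)]
      rw [abs_le]
      constructor <;> nlinarith [hQ0]
    rw [dotp_sub_left] at habs
    rw [abs_le]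
    rw [abs_le] at habs
    constructor
    · linarith
    · linarith
  -- bound norm2sq (B h) by C * ‖h‖²
  set C := ∑ m, (∑ n, |B m n|) ^ 2 with hCdef
  have hC0 : 0 ≤ C := Finset.sum_nonneg fun m _ => sq_nonneg _
  have hCb : ∀ h : Fin N → ℝ, norm2sq (B.mulVec h) ≤ C * (‖h‖ * ‖h‖) := by
    intro h
    unfold norm2sq
    rw [hCdef, Finset.sum_mul]
    refine Finset.sum_le_sum fun m _ => ?_
    have h1 : |B.mulVec h m| ≤ (∑ n, |B m n|) * ‖h‖ := by
      have e : B.mulVec h m = ∑ n, B m n * h n := by simp [Matrix.mulVec, dotProduct]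
      rw [e, Finset.sum_mul]
      calc |∑ n, B m n * h n| ≤ ∑ n, |B m n * h n| := Finset.abs_sum_le_sum_abs _ _
        _ ≤ ∑ n, |B m n| * ‖h‖ := Finset.sum_le_sum fun n _ => by
            rw [abs_mul]
            refine mul_le_mul_of_nonneg_left ?_ (abs_nonneg _)
            simpa [Real.norm_eq_abs] using norm_le_pi_norm h n
    have h2 : (B.mulVec h m) ^ 2 ≤ ((∑ n, |B m n|) * ‖h‖) ^ 2 := by
      rw [← sq_abs (B.mulVec h m)]
      exact pow_le_pow_left₀ (abs_nonneg _) h1 2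
    calc (B.mulVec h m) ^ 2 ≤ ((∑ n, |B m n|) * ‖h‖) ^ 2 := h2
      _ = (∑ n, |B m n|) ^ 2 * (‖h‖ * ‖h‖) := by ring
  -- differentiability
  have hder : HasFDerivAt (genHuber B) L x := by
    rw [hasFDerivAt_iff_isLittleO_nhds_zero]
    have hbig : (fun h => genHuber B (x + h) - genHuber B x - L h) =O[nhds 0]
        fun h : Fin N → ℝ => ‖h‖ * ‖h‖ := by
      refine Asymptotics.IsBigO.of_bound (2 * C) (Filter.Eventually.of_forall fun h => ?_)
      rw [hL, Real.norm_eq_abs]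
      calc |genHuber B (x + h) - genHuber B x - dotp r (B.mulVec h)| ≤
            2 * norm2sq (B.mulVec h) := hkey h
        _ ≤ 2 * (C * (‖h‖ * ‖h‖)) := by linarith [hCb h]
        _ ≤ 2 * C * ‖‖h‖ * ‖h‖‖ := by
            rw [Real.norm_of_nonneg (by positivity)]; ring_nf; linarith [hCb h]
    refine hbig.trans_isLittleO ?_
    rw [Asymptotics.isLittleO_iff]
    intro ε hε
    filter_upwards [Metric.closedBall_mem_nhds (0 : Fin N → ℝ) hε] with h hh
    have hle : ‖h‖ ≤ ε := by simpa [Metric.mem_closedBall, dist_zero_right] using hh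
    rw [Real.norm_of_nonneg (by positivity)]
    exact mul_le_mul_of_nonneg_right hle (norm_nonneg _)
  refine ⟨hder.differentiableAt, fun n => ?_⟩
  rw [hder.fderiv, hL]
  have hp : dotp r (B.mulVec (Pi.single n 1)) ≤ 1 := by
    have h1 := subgrad hvx (vx + Pi.single n 1)
    have e : vx + Pi.single n 1 - vx = Pi.single n 1 := by abel
    rw [e] at h1
    have h2 := norm1_add_single_le vx n 1
    simp only [abs_one] at h2
    linarith
  have hm : -1 ≤ dotp r (B.mulVec (Pi.single n 1)) := by
    have h1 := subgrad hvx (vx + Pi.single n (-1))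
    have e : vx + Pi.single n (-1) - vx = Pi.single n (-1) := by abel
    rw [e] at h1
    have e2 : (Pi.single n (-1) : Fin N → ℝ) = -(Pi.single n 1) := by
      funext k; simp [Pi.single_apply]; split <;> simp
    rw [e2, Matrix.mulVec_neg, dotp_neg_right] at h1
    have h2 := norm1_add_single_le vx n (-1)
    simp only [abs_neg, abs_one] at h2
    rw [e2] at h2
    linarith
  rw [abs_le]
  exact ⟨hm, hp⟩
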